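/- Let P(s) = a₃s³ + a₂s² + a₁s + a₀ be a real cubic polynomial. If all coefficients a₀, a₁, a₂, a₃ are strictly negative and a₂·a₁ > a₃·a₀, then every complex root of P has strictly negative real part. -/
import Mathlib


open Complex

/-- Routh–Hurwitz criterion for cubics (negative-coefficient convention):
if `a₀, a₁, a₂, a₃ < 0` and `a₂·a₁ > a₃·a₀`, every complex root of
`a₃ s³ + a₂ s² + a₁ s + a₀` has strictly negative real part. -/
theorem routh_hurwitz_cubic (a0 a1 a2 a3 : ℝ)
    (h0 : a0 < 0) (h1 : a1 < 0) (h2 : a2 < 0) (h3 : a3 < 0)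
    (h : a2 * a1 > a3 * a0) (s : ℂ)
    (hroot : (a3 : ℂ) * s ^ 3 + (a2 : ℂ) * s ^ 2 + (a1 : ℂ) * s + (a0 : ℂ) = 0) :
    s.re < 0 := by
  obtain ⟨x, y⟩ := s
  have hre := congrArg Complex.re hroot
  have him := congrArg Complex.im hroot
  simp only [pow_succ, pow_zero, one_mul, Complex.add_re, Complex.add_im,
    Complex.mul_re, Complex.mul_im, Complex.ofReal_re, Complex.ofReal_im,
    Complex.zero_re, Complex.zero_im] at hre him
  show x < 0
  by_contra hc
  push_neg at hc
  have hre' : a3 * (x ^ 3 - 3 * x * y ^ 2) + a2 * (x ^ 2 - y ^ 2) + a1 * x + a0 = 0 := by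
    linear_combination hre
  rcases eq_or_ne y 0 with hy0 | hy0
  · rw [hy0] at hre'
    nlinarith [mul_nonneg (neg_nonneg.mpr h3.le) (mul_nonneg (mul_nonneg hc hc) hc),
      mul_nonneg (neg_nonneg.mpr h2.le) (mul_nonneg hc hc),
      mul_nonneg (neg_nonneg.mpr h1.le) hc]
  · have him' : y * (a3 * (3 * x ^ 2 - y ^ 2) + 2 * a2 * x + a1) = 0 := by
      linear_combination him
    have him'' : a3 * (3 * x ^ 2 - y ^ 2) + 2 * a2 * x + a1 = 0 :=
      (mul_eq_zero.mp him').resolve_left hy0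
    have hy2 : a3 * y ^ 2 = 3 * a3 * x ^ 2 + 2 * a2 * x + a1 := by linarith [him'']
    have key : 8 * a3 ^ 2 * x ^ 3 + 8 * (a3 * a2) * x ^ 2 + 2 * (a3 * a1 + a2 ^ 2) * x
        = a3 * a0 - a2 * a1 := by
      linear_combination (-a3) * hre' + (-(3 * x * a3) - a2) * hy2
    nlinarith [mul_nonneg (sq_nonneg a3) (mul_nonneg (mul_nonneg hc hc) hc),
      mul_nonneg (mul_pos_of_neg_of_neg h3 h2).le (mul_nonneg hc hc),
      mul_nonneg (mul_pos_of_neg_of_neg h3 h1).le hc,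
      mul_nonneg (sq_nonneg a2) hc]
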